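/- Necessity of condition C4, direct parametrization (Theorem 2c, counterexample): suppose m ≔ Σ_{t=0}^∞ η_t d_t < ∞ and p_0 < 1, and choose r_2 = 1 − (1 − p_0)/m (assumed to lie in [0,1)). Then for all t, p_t ≤ (1 + p_0)/2, and hence 1 − v(p_t) ≥ (1 − r_2)(1 − p_0)/2 > 0; in particular the values v(p_t) stay bounded away from the optimal value 1. -/

import Mathlib

open Finset Filter

/-- **Necessity of condition C4, direct parametrization** (Theorem 2c,
counterexample). Two-armed bandit with rewards `q(a₁) = 1` and `q(a₂) = r₂`;
a policy is the probability `p_t` of playing `a₁`, with value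
`v(p) = p + (1 - p) r₂`. If `m = Σ_t η_t d_t < ∞`, `p₀ < 1`, and
`r₂ = 1 - (1 - p₀)/m ∈ [0, 1)`, then the direct-parametrization updates
`p_{t+1} = min(1, p_t + η_t d_t (1 - r₂)/2)` satisfy `p_t ≤ (1 + p₀)/2`
for all `t`, hence `1 - v(p_t) ≥ (1 - r₂)(1 - p₀)/2 > 0`: the values stay
bounded away from the optimal value `1`. -/
theorem necessity_direct
    (η : ℕ → ℝ) (hη : ∀ t, 0 < η t)
    (d : ℕ → ℝ) (hd : ∀ t, 0 < d t)
    (m : ℝ) (hm : HasSum (fun t => η t * d t) m)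
    (p : ℕ → ℝ) (hp0mem : 0 ≤ p 0) (hp0 : p 0 < 1)
    (r2 : ℝ) (hr2 : r2 = 1 - (1 - p 0) / m)
    (hr2mem : 0 ≤ r2 ∧ r2 < 1)
    (hupd : ∀ t, p (t + 1) = min 1 (p t + η t * d t * (1 - r2) / 2)) :
    ∀ t, p t ≤ (1 + p 0) / 2 ∧
      (1 - r2) * (1 - p 0) / 2 ≤ 1 - (p t + (1 - p t) * r2) ∧
      0 < (1 - r2) * (1 - p 0) / 2 := by
  have hr2pos : 0 < 1 - r2 := by linarith [hr2mem.2]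
  have hm0 : 0 < m := by
    have h1 : ∑ i ∈ Finset.range 1, η i * d i ≤ m :=
      sum_le_hasSum _ (fun i _ => (mul_pos (hη i) (hd i)).le) hm
    simp only [Finset.sum_range_one] at h1
    exact lt_of_lt_of_le (mul_pos (hη 0) (hd 0)) h1
  have hmr : m * (1 - r2) = 1 - p 0 := by
    rw [hr2]; field_simp; ring
  have hkey : ∀ t, p t ≤ p 0 + (∑ i ∈ Finset.range t, η i * d i) * (1 - r2) / 2 := by
    intro t
    induction t with
    | zero => simp
    | succ n ih =>
      rw [hupd n, Finset.sum_range_succ]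
      have := min_le_right 1 (p n + η n * d n * (1 - r2) / 2)
      nlinarith
  intro t
  have hS : (∑ i ∈ Finset.range t, η i * d i) ≤ m :=
    sum_le_hasSum _ (fun i _ => (mul_pos (hη i) (hd i)).le) hm
  have hpt : p t ≤ (1 + p 0) / 2 := by nlinarith [hkey t]
  exact ⟨hpt, by nlinarith, by nlinarith⟩
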